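/- Let n ≥ 2, let A be an n×n positive semidefinite Hermitian complex matrix (so its diagonal entries A_{jj} are real and nonnegative), and let λ_1,…,λ_n be nonnegative real numbers. Then ∑_{j,k,l pairwise distinct} λ_j² |A_{kl}|² + ∑_{j<k} (λ_j A_{kk} + λ_k A_{jj})² ≤ ( ∑_{j<k} (λ_j A_{kk} + λ_k A_{jj}) )², where the first sum is over triples (j,k,l) of pairwise distinct indices in {1,…,n} and the remaining sums are over pairs j < k in {1,…,n}. -/

import Mathlib

open Finset Matrix
open scoped ComplexOrder

lemma psd_entry_sq_le {n : ℕ} {A : Matrix (Fin n) (Fin n) ℂ} (hA : A.PosSemidef) (k m : Fin n) :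
    ‖A k m‖ ^ 2 ≤ (A k k).re * (A m m).re := by
  obtain ⟨B, rfl⟩ : ∃ B : Matrix (Fin n) (Fin n) ℂ, A = Bᴴ * B := by
    open scoped MatrixOrder in exact CStarAlgebra.nonneg_iff_eq_star_mul_self.mp hA.nonneg
  let u : EuclideanSpace ℂ (Fin n) := WithLp.toLp 2 (fun i => B i k)
  let v : EuclideanSpace ℂ (Fin n) := WithLp.toLp 2 (fun i => B i m)
  have huv : (Bᴴ * B) k m = inner (𝕜 := ℂ) u v := by
    rw [PiLp.inner_apply]
    simp [u, v, Matrix.mul_apply, Matrix.conjTranspose_apply, PiLp.inner_apply,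
      RCLike.inner_apply, EuclideanSpace]
    exact Finset.sum_congr rfl fun _ _ => mul_comm _ _
  have huu : (Bᴴ * B) k k = inner (𝕜 := ℂ) u u := by
    rw [PiLp.inner_apply]
    simp [u, Matrix.mul_apply, Matrix.conjTranspose_apply, PiLp.inner_apply,
      RCLike.inner_apply, EuclideanSpace]
    exact Finset.sum_congr rfl fun _ _ => Complex.conj_mul' _
  have hvv : (Bᴴ * B) m m = inner (𝕜 := ℂ) v v := by
    rw [PiLp.inner_apply]
    simp [v, Matrix.mul_apply, Matrix.conjTranspose_apply, PiLp.inner_apply,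
      RCLike.inner_apply, EuclideanSpace]
    exact Finset.sum_congr rfl fun _ _ => Complex.conj_mul' _
  have hkk : ((Bᴴ * B) k k).re = ‖u‖ ^ 2 := by
    rw [huu]; exact_mod_cast inner_self_eq_norm_sq (𝕜 := ℂ) u
  have hmm : ((Bᴴ * B) m m).re = ‖v‖ ^ 2 := by
    rw [hvv]; exact_mod_cast inner_self_eq_norm_sq (𝕜 := ℂ) v
  have h1 : ‖(Bᴴ * B) k m‖ = ‖inner (𝕜 := ℂ) u v‖ := by
    rw [huv]
  rw [h1, hkk, hmm]
  have h2 := norm_inner_le_norm (𝕜 := ℂ) u v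
  nlinarith [norm_nonneg (inner (𝕜 := ℂ) u v), norm_nonneg u, norm_nonneg v]

lemma psd_diag_nonneg {n : ℕ} {A : Matrix (Fin n) (Fin n) ℂ} (hA : A.PosSemidef) (j : Fin n) :
    0 ≤ (A j j).re := by
  have := hA.re_dotProduct_nonneg (Pi.single j 1)
  simpa [dotProduct, Matrix.mulVec, Pi.single_apply] using this

def sp {n : ℕ} (a b : Fin n) : Fin n × Fin n := if a < b then (a, b) else (b, a)

lemma sp_mem {n : ℕ} {a b : Fin n} (h : a ≠ b) : (sp a b).1 < (sp a b).2 := by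
  unfold sp; split_ifs with h1
  · exact h1
  · exact lt_of_le_of_ne (not_lt.mp h1) h.symm

lemma sp_eq {n : ℕ} {a b c d : Fin n} (h : sp a b = sp c d) :
    (a = c ∧ b = d) ∨ (a = d ∧ b = c) := by
  unfold sp at h
  split_ifs at h <;> simp_all [Prod.ext_iff] <;> tauto

lemma sumIoi {n : ℕ} (f : Fin n → Fin n → ℝ) :
    ∑ j, ∑ k ∈ Ioi j, f j k
      = ∑ p ∈ univ.filter (fun p : Fin n × Fin n => p.1 < p.2), f p.1 p.2 := by
  rw [Finset.sum_filter, Fintype.sum_prod_type]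
  refine Finset.sum_congr rfl fun j _ => ?_
  rw [← Finset.sum_filter]
  congr 1
  ext k; simp

lemma sumPairs {n : ℕ} (s : Finset (Fin n × Fin n)) (g : Fin n × Fin n → Fin n × Fin n → ℝ) :
    ∑ p ∈ s, ∑ q ∈ s.erase p, g p q
      = ∑ y ∈ (s ×ˢ s).filter (fun y => y.1 ≠ y.2), g y.1 y.2 := by
  rw [Finset.sum_filter, Finset.sum_product]
  exact Finset.sum_congr rfl fun p _ => by rw [← Finset.sum_filter, Finset.filter_ne]

theorem posSemidef_sum_sq_le_sq_sum {n : ℕ} (hn : 2 ≤ n)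
    (A : Matrix (Fin n) (Fin n) ℂ) (hA : A.PosSemidef)
    (l : Fin n → ℝ) (hl : ∀ j, 0 ≤ l j) :
    (∑ j, ∑ k ∈ univ.erase j, ∑ m ∈ (univ.erase j).erase k,
        (l j) ^ 2 * ‖A k m‖ ^ 2)
      + ∑ j, ∑ k ∈ Ioi j, (l j * (A k k).re + l k * (A j j).re) ^ 2
    ≤ (∑ j, ∑ k ∈ Ioi j, (l j * (A k k).re + l k * (A j j).re)) ^ 2 := by
  set t : Fin n × Fin n → ℝ :=
    fun p => l p.1 * (A p.2 p.2).re + l p.2 * (A p.1 p.1).re with ht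
  set P : Finset (Fin n × Fin n) := univ.filter (fun p => p.1 < p.2) with hP
  have ht_nonneg : ∀ p, 0 ≤ t p := fun p =>
    add_nonneg (mul_nonneg (hl _) (psd_diag_nonneg hA _))
      (mul_nonneg (hl _) (psd_diag_nonneg hA _))
  have ht_sp : ∀ a b : Fin n, t (sp a b) = l a * (A b b).re + l b * (A a a).re := by
    intro a b; unfold sp; split_ifs <;> simp [ht] <;> ring
  -- rewrite pair sums
  have hS : (∑ j, ∑ k ∈ Ioi j, (l j * (A k k).re + l k * (A j j).re)) = ∑ p ∈ P, t p :=
    sumIoi _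
  have hS2 : (∑ j, ∑ k ∈ Ioi j, (l j * (A k k).re + l k * (A j j).re) ^ 2)
      = ∑ p ∈ P, t p ^ 2 := sumIoi _
  -- triple set
  set T : Finset (Σ _ : Fin n, Σ _ : Fin n, Fin n) :=
    univ.sigma (fun j => (univ.erase j).sigma (fun k => (univ.erase j).erase k)) with hT
  have hTriple : (∑ j, ∑ k ∈ univ.erase j, ∑ m ∈ (univ.erase j).erase k,
      (l j) ^ 2 * ‖A k m‖ ^ 2)
      = ∑ x ∈ T, (l x.1) ^ 2 * ‖A x.2.1 x.2.2‖ ^ 2 := by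
    rw [hT, Finset.sum_sigma]
    exact Finset.sum_congr rfl fun j _ => by rw [Finset.sum_sigma]
  -- expansion of the square
  set Q : Finset ((Fin n × Fin n) × (Fin n × Fin n)) :=
    (P ×ˢ P).filter (fun y => y.1 ≠ y.2) with hQ
  have hexp : (∑ p ∈ P, t p) ^ 2
      = ∑ p ∈ P, t p ^ 2 + ∑ y ∈ Q, t y.1 * t y.2 := by
    calc (∑ p ∈ P, t p) ^ 2 = ∑ p ∈ P, ∑ q ∈ P, t p * t q := by
          rw [sq, Finset.sum_mul_sum]
      _ = ∑ p ∈ P, (t p ^ 2 + ∑ q ∈ P.erase p, t p * t q) :=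
          Finset.sum_congr rfl fun p hp => by
            rw [← Finset.add_sum_erase _ (fun q => t p * t q) hp, sq]
      _ = ∑ p ∈ P, t p ^ 2 + ∑ p ∈ P, ∑ q ∈ P.erase p, t p * t q :=
          Finset.sum_add_distrib
      _ = ∑ p ∈ P, t p ^ 2 + ∑ y ∈ Q, t y.1 * t y.2 := by rw [sumPairs, ← hQ]
  rw [hTriple, hS, hS2, hexp]
  have main : ∑ x ∈ T, (l x.1) ^ 2 * ‖A x.2.1 x.2.2‖ ^ 2
      ≤ ∑ y ∈ Q, t y.1 * t y.2 := by
    have hmemT : ∀ x ∈ T, x.2.1 ≠ x.1 ∧ x.2.2 ≠ x.1 ∧ x.2.2 ≠ x.2.1 := by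
      intro x hx
      simp only [hT, Finset.mem_sigma, Finset.mem_erase, Finset.mem_univ, and_true] at hx
      tauto
    set φ : (Σ _ : Fin n, Σ _ : Fin n, Fin n) → (Fin n × Fin n) × (Fin n × Fin n) :=
      fun x => (sp x.1 x.2.1, sp x.1 x.2.2) with hφ
    have hinj : Set.InjOn φ T := by
      rintro ⟨j, k, m⟩ hx ⟨j', k', m'⟩ hy h
      obtain ⟨hkj, hmj, hmk⟩ := hmemT _ hx
      obtain ⟨hkj', hmj', hmk'⟩ := hmemT _ hy
      replace hkj : k ≠ j := hkj
      replace hmj : m ≠ j := hmj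
      replace hmk : m ≠ k := hmk
      replace hkj' : k' ≠ j' := hkj'
      replace hmj' : m' ≠ j' := hmj'
      replace hmk' : m' ≠ k' := hmk'
      simp only [hφ] at h
      rw [Prod.mk.injEq] at h
      obtain ⟨h1, h2⟩ := h
      rcases sp_eq h1 with ⟨e3, e4⟩ | ⟨e3, e4⟩ <;>
        rcases sp_eq h2 with ⟨e5, e6⟩ | ⟨e5, e6⟩ <;> simp_all
    have hmap : ∀ x ∈ T, φ x ∈ Q := by
      rintro ⟨j, k, m⟩ hx
      obtain ⟨hkj, hmj, hmk⟩ := hmemT _ hx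
      simp only [hQ, hφ, Finset.mem_filter, Finset.mem_product, hP, Finset.mem_univ, true_and]
      refine ⟨⟨sp_mem hkj.symm, sp_mem hmj.symm⟩, ?_⟩
      intro h
      rcases sp_eq h with ⟨-, e⟩ | ⟨e1, e2⟩
      · exact hmk e.symm
      · exact hkj e2
    calc ∑ x ∈ T, (l x.1) ^ 2 * ‖A x.2.1 x.2.2‖ ^ 2
        ≤ ∑ x ∈ T, t (φ x).1 * t (φ x).2 := by
          refine Finset.sum_le_sum fun x hx => ?_
          obtain ⟨hkj, hmj, hmk⟩ := hmemT _ hx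
          simp only [hφ, ht_sp]
          have hE := psd_entry_sq_le hA x.2.1 x.2.2
          have d1 := psd_diag_nonneg hA x.1
          have d2 := psd_diag_nonneg hA x.2.1
          have d3 := psd_diag_nonneg hA x.2.2
          nlinarith [hl x.1, hl x.2.1, hl x.2.2, sq_nonneg (l x.1),
            mul_nonneg (hl x.2.1) d1, mul_nonneg (hl x.2.2) d1,
            mul_nonneg (mul_nonneg (hl x.1) (hl x.2.2)) (mul_nonneg d2 d1),
            mul_nonneg (mul_nonneg (hl x.2.1) (hl x.1)) (mul_nonneg d1 d3),
            mul_nonneg (mul_nonneg (hl x.2.1) (hl x.2.2)) (mul_nonneg d1 d1)]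
      _ = ∑ y ∈ T.image φ, t y.1 * t y.2 := (Finset.sum_image (f := fun y => t y.1 * t y.2) (fun x hx y hy h => hinj hx hy h)).symm
      _ ≤ ∑ y ∈ Q, t y.1 * t y.2 := by
          refine Finset.sum_le_sum_of_subset_of_nonneg ?_ (fun y _ _ => mul_nonneg (ht_nonneg _) (ht_nonneg _))
          intro y hy
          obtain ⟨x, hx, rfl⟩ := Finset.mem_image.mp hy
          exact hmap x hx
  linarith
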